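/- In a free group F, no nontrivial element is conjugate to its own inverse: if g ∈ F, g ≠ 1, then there is no h ∈ F with h g h⁻¹ = g⁻¹. -/

import Mathlib

set_option linter.unusedSectionVars false

namespace FGconj
open FreeGroup
variable {α : Type*} [DecidableEq α]

/-- inverse letter -/
def invP (x : α × Bool) : α × Bool := (x.1, !x.2)

@[simp] lemma invP_invP (x : α × Bool) : invP (invP x) = x := by simp [invP]

lemma invP_ne (x : α × Bool) : invP x ≠ x := by
  simp [invP, Prod.ext_iff]

lemma eq_invP_comm {x y : α × Bool} : x = invP y ↔ y = invP x := by
  constructor <;> rintro rfl <;> simp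

lemma invP_eq_iff {x y : α × Bool} : x = invP y ↔ (x.1 = y.1 ∧ x.2 = !y.2) := by
  cases x; cases y; simp [invP, Prod.ext_iff]

/-- a reduced word: no adjacent cancelling pair -/
def Reduced (L : List (α × Bool)) : Prop := List.Chain' (fun a b => a ≠ invP b) L

lemma reduced_nil : Reduced ([] : List (α × Bool)) := List.isChain_nil

lemma Reduced.reduce_eq {L : List (α × Bool)} (h : Reduced L) : reduce L = L := by
  induction L with
  | nil => rfl
  | cons x L ih =>
    rw [Reduced, List.Chain', List.isChain_cons] at h
    rw [reduce.cons, ih h.2]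
    cases L with
    | nil => rfl
    | cons hd tl =>
      have hx : x ≠ invP hd := h.1 hd rfl
      dsimp only
      rw [if_neg (fun hc => hx (invP_eq_iff.2 hc))]

lemma reduced_reduce (L : List (α × Bool)) : Reduced (reduce L) := by
  induction L with
  | nil => exact reduced_nil
  | cons x L ih =>
    rw [reduce.cons]
    rcases h : reduce L with _ | ⟨hd, tl⟩
    · simp [Reduced, List.Chain', List.isChain_singleton]
    · rw [h] at ih
      dsimp only
      split_ifs with hc
      · exact (List.isChain_cons.1 ih).2
      · rw [Reduced, List.Chain', List.isChain_cons]
        refine ⟨fun y hy => ?_, ih⟩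
        simp only [List.head?_cons, Option.mem_def, Option.some_inj] at hy
        subst hy
        exact fun hy' => hc (invP_eq_iff.1 hy')

lemma reduced_iff {L : List (α × Bool)} : Reduced L ↔ reduce L = L :=
  ⟨Reduced.reduce_eq, fun h => h ▸ reduced_reduce L⟩

lemma reduced_toWord (g : FreeGroup α) : Reduced (toWord g) :=
  reduced_iff.2 (reduce_toWord g)

lemma Reduced.toWord_mk {L : List (α × Bool)} (h : Reduced L) : (mk L).toWord = L := by
  rw [FreeGroup.toWord_mk, h.reduce_eq]

lemma Reduced.eq_of_mk_eq {L₁ L₂ : List (α × Bool)} (h₁ : Reduced L₁) (h₂ : Reduced L₂)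
    (h : mk L₁ = mk L₂) : L₁ = L₂ := by
  rw [← h₁.toWord_mk, ← h₂.toWord_mk, h]

lemma Reduced.invRev {L : List (α × Bool)} (h : Reduced L) : Reduced (invRev L) := by
  rw [reduced_iff, reduce_invRev, h.reduce_eq]

lemma Reduced.left {L₁ L₂ : List (α × Bool)} (h : Reduced (L₁ ++ L₂)) : Reduced L₁ :=
  h.prefix (List.prefix_append _ _)

lemma Reduced.right {L₁ L₂ : List (α × Bool)} (h : Reduced (L₁ ++ L₂)) : Reduced L₂ :=
  h.suffix (List.suffix_append _ _)


/-- cyclically reduced: last letter is not inverse of first -/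
def Cyc (L : List (α × Bool)) : Prop := ∀ x ∈ L.getLast?, ∀ y ∈ L.head?, x ≠ invP y

lemma cyc_nil : Cyc ([] : List (α × Bool)) := by simp [Cyc]

lemma mk_concat_invP (c : α × Bool) : mk [c, invP c] = (1 : FreeGroup α) := by
  rw [one_eq_mk]
  apply reduce.exact
  show reduce [c, invP c] = reduce []
  rw [reduce.cons]
  simp [reduce_singleton, invP]

lemma mk_invP (c : α × Bool) : mk [invP c] = (mk [c] : FreeGroup α)⁻¹ := by
  apply eq_inv_of_mul_eq_one_right
  rw [mul_mk]
  exact mk_concat_invP c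

lemma invRev_concat (L : List (α × Bool)) (c : α × Bool) :
    invRev (L ++ [c]) = invP c :: invRev L := by
  simp [invRev, invP]

lemma head?_invRev (L : List (α × Bool)) : (invRev L).head? = (L.getLast?).map invP := by
  simp [invRev, List.head?_reverse, List.getLast?_map]
  rfl

lemma getLast?_invRev (L : List (α × Bool)) : (invRev L).getLast? = (L.head?).map invP := by
  simp [invRev, List.getLast?_reverse, List.head?_map]
  rfl

lemma rot_exists_trans {w v₁ v : List (α × Bool)} (h1 : ∃ k, v₁ = w.rotate k)
    (h2 : ∃ k, v = v₁.rotate k) : ∃ k, v = w.rotate k := by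
  obtain ⟨k1, rfl⟩ := h1
  obtain ⟨k2, rfl⟩ := h2
  exact ⟨k1 + k2, (List.rotate_rotate w k1 k2)⟩


lemma key : ∀ (n : ℕ) (u w v : List (α × Bool)), u.length ≤ n →
    Reduced u → Reduced w → Reduced v → Cyc w → Cyc v →
    mk u * mk w * (mk u)⁻¹ = mk v → ∃ k, v = w.rotate k := by
  intro n
  induction n with
  | zero =>
    intro u w v hu hRu hRw hRv hCw hCv heq
    have hu0 : u = [] := List.eq_nil_of_length_eq_zero (Nat.le_zero.1 hu)
    subst hu0
    rw [← one_eq_mk] at heq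
    have h1 : mk w = mk v := by simpa using heq
    exact ⟨0, by rw [hRw.eq_of_mk_eq hRv h1, List.rotate_zero]⟩
  | succ n ih =>
    intro u w v hu hRu hRw hRv hCw hCv heq
    rcases List.eq_nil_or_concat u with rfl | ⟨u', c, rfl⟩
    · rw [← one_eq_mk] at heq
      have h1 : mk w = mk v := by simpa using heq
      exact ⟨0, by rw [hRw.eq_of_mk_eq hRv h1, List.rotate_zero]⟩
    rw [List.concat_eq_append] at hu hRu heq
    have hu' : u'.length ≤ n := by simp at hu; omega
    have hRu' : Reduced u' := hRu.left
    cases w with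
    | nil =>
      have h1 : (1 : FreeGroup α) = mk v := by rw [← heq, ← one_eq_mk]; group
      have hv : v = [] := (reduced_nil.eq_of_mk_eq hRv (one_eq_mk ▸ h1)).symm
      exact ⟨0, by rw [hv]; rfl⟩
    | cons d w' =>
      rcases List.eq_nil_or_concat (d :: w') with habs | ⟨w'', e, hw2⟩
      · simp at habs
      rw [List.concat_eq_append] at hw2
      have hcsplit : mk (u' ++ [c]) = mk u' * mk [c] := (mul_mk).symm
      by_cases hcd : c = invP d
      · -- cancellation on the left junction
        have hc : mk ([c] : List (α × Bool)) = (mk [d])⁻¹ := by rw [hcd, mk_invP]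
        have hdw : mk (d :: w') = mk [d] * mk w' := by rw [mul_mk]; rfl
        have hwd : mk (w' ++ [d]) = mk w' * mk [d] := (mul_mk).symm
        have heq' : mk u' * mk (w' ++ [d]) * (mk u')⁻¹ = mk v := by
          rw [← heq, hcsplit, hdw, hwd, hc]; group
        have hRw1 : Reduced (w' ++ [d]) := by
          rw [Reduced, List.Chain', List.isChain_append]
          refine ⟨hRw.tail, List.isChain_singleton _, ?_⟩
          intro x hx y hy
          simp only [List.head?_cons, Option.mem_def, Option.some_inj] at hy
          subst hy
          cases w' with
          | nil => simp at hx
          | cons z t =>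
            apply hCw x _ d rfl
            rw [List.getLast?_cons_cons]
            exact hx
        have hCw1 : Cyc (w' ++ [d]) := by
          intro x hx y hy
          rw [List.getLast?_concat] at hx
          simp only [Option.mem_def, Option.some_inj] at hx
          subst hx
          cases w' with
          | nil =>
            simp only [List.nil_append, List.head?_cons, Option.mem_def, Option.some_inj] at hy
            subst hy
            exact Ne.symm (invP_ne d)
          | cons z t =>
            simp only [List.cons_append, List.head?_cons, Option.mem_def, Option.some_inj] at hy
            subst hy
            exact (List.isChain_cons.1 hRw).1 z rfl
        obtain ⟨k, hk⟩ := ih u' (w' ++ [d]) v hu' hRu' hRw1 hRv hCw1 hCv heq'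
        refine ⟨1 + k, ?_⟩
        rw [← List.rotate_rotate]
        have : (d :: w').rotate 1 = w' ++ [d] := by
          rw [List.rotate_cons_succ, List.rotate_zero]
        rw [this, hk]
      by_cases hec : e = c
      · -- cancellation on the right junction
        have hwsplit : mk (d :: w') = mk w'' * mk [e] := by rw [hw2, mul_mk]
        have hew : mk (e :: w'') = mk [e] * mk w'' := by rw [mul_mk, List.singleton_append]
        have hce : mk ([c] : List (α × Bool)) = mk [e] := by rw [hec]
        have heq' : mk u' * mk (e :: w'') * (mk u')⁻¹ = mk v := by
          rw [← heq, hcsplit, hwsplit, hew, hce]; group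
        have hRw2 : Reduced (w'' ++ [e]) := by rwa [← hw2]
        have hRw1 : Reduced (e :: w'') := by
          rw [Reduced, List.Chain', List.isChain_cons]
          refine ⟨?_, hRw2.left⟩
          intro y hy
          cases w'' with
          | nil => simp at hy
          | cons z t =>
            have hd : d = z := by
              have := congrArg List.head? hw2
              simpa using this
            subst hd
            simp only [List.head?_cons, Option.mem_def, Option.some_inj] at hy
            subst hy
            exact hCw e (by rw [hw2, List.getLast?_concat]; rfl) d rfl
        have hCw1 : Cyc (e :: w'') := by
          intro x hx y hy
          simp only [List.head?_cons, Option.mem_def, Option.some_inj] at hy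
          subst hy
          cases w'' with
          | nil =>
            simp only [List.getLast?_singleton, Option.mem_def, Option.some_inj] at hx
            subst hx
            exact Ne.symm (invP_ne e)
          | cons z t =>
            rw [List.getLast?_cons_cons] at hx
            exact (List.isChain_append.1 hRw2).2.2 x hx e rfl
        obtain ⟨k, hk⟩ := ih u' (e :: w'') v hu' hRu' hRw1 hRv hCw1 hCv heq'
        refine ⟨w''.length + k, ?_⟩
        rw [← List.rotate_rotate]
        have hrot : (d :: w').rotate w''.length = e :: w'' := by
          rw [hw2, List.rotate_eq_drop_append_take (by simp), List.drop_left, List.take_left,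
            List.singleton_append]
        rw [hrot, hk]
      · -- no cancellation: contradiction with Cyc v
        exfalso
        have hveq : mk v = mk (((u' ++ [c]) ++ (d :: w')) ++ invRev (u' ++ [c])) := by
          rw [← heq, inv_mk, mul_mk, mul_mk]
        have hjunc1 : ∀ x ∈ (u' ++ [c]).getLast?, ∀ y ∈ (d :: w').head?, x ≠ invP y := by
          intro x hx y hy
          rw [List.getLast?_concat] at hx
          simp only [List.head?_cons, Option.mem_def, Option.some_inj] at hx hy
          subst hx; subst hy
          exact hcd
        have hjunc2 : ∀ x ∈ ((u' ++ [c]) ++ (d :: w')).getLast?,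
            ∀ y ∈ (invRev (u' ++ [c])).head?, x ≠ invP y := by
          intro x hx y hy
          rw [List.getLast?_append_of_ne_nil _ (by simp)] at hx
          rw [head?_invRev, List.getLast?_concat] at hy
          rw [hw2, List.getLast?_concat] at hx
          simp only [Option.mem_def, Option.some_inj, Option.map_some] at hx hy
          subst hx; subst hy
          rw [invP_invP]
          exact hec
        have hRlist : Reduced (((u' ++ [c]) ++ (d :: w')) ++ invRev (u' ++ [c])) := by
          rw [Reduced, List.Chain', List.isChain_append]
          exact ⟨List.isChain_append.2 ⟨hRu, hRw, hjunc1⟩, hRu.invRev, hjunc2⟩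
        have hv : v = ((u' ++ [c]) ++ (d :: w')) ++ invRev (u' ++ [c]) :=
          hRv.eq_of_mk_eq hRlist hveq
        obtain ⟨f, hf⟩ : ∃ f, (u' ++ [c]).head? = some f := by
          cases u' with
          | nil => exact ⟨c, rfl⟩
          | cons z t => exact ⟨z, rfl⟩
        have hhead : v.head? = some f := by
          rw [hv, List.head?_append_of_ne_nil _ (by simp), List.head?_append_of_ne_nil _ (by simp), hf]
        have hlast : v.getLast? = some (invP f) := by
          rw [hv, List.getLast?_append_of_ne_nil _ (by simp [invRev]), getLast?_invRev, hf]
          rfl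
        exact hCv (invP f) hlast f hhead rfl


lemma no_rot {w : List (α × Bool)} (hR : Reduced w) (k : ℕ)
    (h : invRev w = w.rotate k) : w = [] := by
  by_contra hne
  have hn : 0 < w.length := List.length_pos_iff.2 hne
  have hget : ∀ (i j : ℕ) (hi : i < w.length) (hj : j < w.length),
      (w.length - 1 - i + k) % w.length = j → invP (w[i]'hi) = w[j]'hj := by
    intro i j hi hj hij
    have h1 : (invRev w)[w.length - 1 - i]? = (w.rotate k)[w.length - 1 - i]? := by rw [h]
    rw [List.getElem?_rotate (by omega)] at h1
    rw [show invRev w = (w.map invP).reverse from rfl] at h1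
    rw [List.getElem?_reverse (by rw [List.length_map]; omega)] at h1
    rw [List.length_map] at h1
    rw [show w.length - 1 - (w.length - 1 - i) = i by omega] at h1
    rw [List.getElem?_map] at h1
    rw [hij] at h1
    rw [List.getElem?_eq_getElem hi, List.getElem?_eq_getElem hj] at h1
    simpa using h1
  have hcn : (w.length - 1 + k) % w.length < w.length := Nat.mod_lt _ hn
  have key2 : ∀ p, p ≤ (w.length - 1 + k) % w.length →
      (w.length - 1 + k - p) % w.length = (w.length - 1 + k) % w.length - p := by
    intro p hp
    have hq := Nat.div_add_mod (w.length - 1 + k) w.length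
    rw [show w.length - 1 + k - p =
      w.length * ((w.length - 1 + k) / w.length) + ((w.length - 1 + k) % w.length - p) by omega,
      Nat.mul_add_mod]
    exact Nat.mod_eq_of_lt (by omega)
  rcases Nat.even_or_odd ((w.length - 1 + k) % w.length) with ⟨p, hp⟩ | ⟨p, hp⟩
  · have hpn : p < w.length := by omega
    have h3 := hget p p hpn hpn (by
      rw [show w.length - 1 - p + k = w.length - 1 + k - p by omega, key2 p (by omega)]; omega)
    exact invP_ne _ h3
  · have hpn : p + 1 < w.length := by omega
    have h3 := hget p (p + 1) (by omega) hpn (by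
      rw [show w.length - 1 - p + k = w.length - 1 + k - p by omega, key2 p (by omega)]; omega)
    have hchain := List.isChain_iff_getElem.1 hR p (by omega)
    apply hchain
    rw [← h3, invP_invP]


lemma Cyc.invRev {L : List (α × Bool)} (hc : Cyc L) : Cyc (FreeGroup.invRev L) := by
  intro x hx y hy
  rw [getLast?_invRev] at hx
  rw [head?_invRev] at hy
  obtain ⟨x', hx', rfl⟩ := Option.map_eq_some_iff.1 hx
  obtain ⟨y', hy', rfl⟩ := Option.map_eq_some_iff.1 hy
  intro hcon
  rw [invP_invP] at hcon
  exact hc y' hy' x' hx' hcon.symm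

lemma main_aux : ∀ (N : ℕ) (g : FreeGroup α), norm g ≤ N →
    (∃ h : FreeGroup α, h * g * h⁻¹ = g⁻¹) → g = 1 := by
  intro N
  induction N with
  | zero =>
    intro g hN _
    exact norm_eq_zero.1 (Nat.le_zero.1 hN)
  | succ N ih =>
    intro g hN ⟨h, heq⟩
    by_cases hCyc : Cyc (toWord g)
    · -- g is cyclically reduced: apply the key lemma
      have heq' : mk (toWord h) * mk (toWord g) * (mk (toWord h))⁻¹ = mk (invRev (toWord g)) := by
        rw [mk_toWord, mk_toWord, ← inv_mk, mk_toWord]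
        exact heq
      obtain ⟨k, hk⟩ := key (toWord h).length (toWord h) (toWord g) (invRev (toWord g)) le_rfl
        (reduced_toWord h) (reduced_toWord g) ((reduced_toWord g).invRev) hCyc hCyc.invRev heq'
      have := no_rot (reduced_toWord g) k hk
      exact toWord_eq_nil_iff.1 this
    · -- g is not cyclically reduced: peel off a conjugating letter
      simp only [Cyc, not_forall] at hCyc
      obtain ⟨x, hx, dh, hd, hxd⟩ := hCyc
      rw [not_not] at hxd
      rcases hw : toWord g with _ | ⟨d', w'⟩
      · rw [hw] at hx; simp at hx
      rw [hw] at hx hd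
      simp only [List.head?_cons, Option.mem_def, Option.some_inj] at hd
      rw [← hd] at hxd
      cases w' with
      | nil =>
        simp only [List.getLast?_singleton, Option.mem_def, Option.some_inj] at hx
        subst hx
        exact absurd hxd.symm (invP_ne _)
      | cons z t =>
        obtain ⟨M, y, hM⟩ : ∃ M y, z :: t = M ++ [y] := by
          rcases List.eq_nil_or_concat (z :: t) with h0 | ⟨M, y, h0⟩
          · simp at h0
          · exact ⟨M, y, by rw [h0, List.concat_eq_append]⟩
        have hxy : y = x := by
          rw [hM, show d' :: (M ++ [y]) = (d' :: M) ++ [y] from rfl,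
            List.getLast?_concat] at hx
          simpa using hx
        subst hxy
        subst hxd
        -- toWord g = d' :: M ++ [invP d']
        set cd : FreeGroup α := mk [d'] with hcd
        set g' : FreeGroup α := mk M with hg'def
        have hg : g = cd * g' * cd⁻¹ := by
          conv_lhs => rw [← mk_toWord (x := g)]
          rw [hw, hM, hcd, hg'def, ← mk_invP, mul_mk, mul_mk]
          rfl
        have hnorm : norm g' ≤ N := by
          have h1 : norm g = (d' :: (M ++ [invP d'])).length := by
            have h0 : norm g = (toWord g).length := rfl
            rw [h0, hw, hM]
          have h2 : norm g' ≤ M.length := norm_mk_le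
          simp at h1
          omega
        have heq2 : (cd⁻¹ * h * cd) * g' * (cd⁻¹ * h * cd)⁻¹ = g'⁻¹ := by
          have h2 : h * (cd * g' * cd⁻¹) * h⁻¹ = (cd * g' * cd⁻¹)⁻¹ := by
            rw [← hg]; exact heq
          calc (cd⁻¹ * h * cd) * g' * (cd⁻¹ * h * cd)⁻¹
              = cd⁻¹ * (h * (cd * g' * cd⁻¹) * h⁻¹) * cd := by group
            _ = cd⁻¹ * (cd * g' * cd⁻¹)⁻¹ * cd := by rw [h2]
            _ = g'⁻¹ := by group
        have hg1 : g' = 1 := ih g' hnorm ⟨_, heq2⟩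
        rw [hg, hg1, mul_one, mul_inv_cancel]

end FGconj

theorem freeGroup_not_conjugate_inverse (α : Type*) (g : FreeGroup α) (hg : g ≠ 1) :
    ¬ ∃ h : FreeGroup α, h * g * h⁻¹ = g⁻¹ := by
  classical
  intro hex
  exact hg (FGconj.main_aux (FreeGroup.norm g) g le_rfl hex)
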